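/- Key Property of BEST Objectives (submodular case): Let (A, f, c) be a multi-agent contract instance with monotone submodular f and A nonempty, let B ∈ (0,1] be a budget, and let φ be a BEST objective. Then Max-φ(B) ≤ Max-Reward-Light(B) + max_{i∈A} φ({i}). -/

import Mathlib

open scoped BigOperators ENNReal
open Finset

/-- Marginal contribution of agent `i` to set `S`: `f_S(i) = f(S) - f(S \ {i})`. -/
noncomputable def marginal {α : Type*} [DecidableEq α] (f : Finset α → ℝ) (S : Finset α)
    (i : α) : ℝ :=
  f S - f (S.erase i)

/-- Payment needed to incentivize `S`, valued in `[0,∞]`, with the conventions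
`0/0 = 0` and `x/0 = ∞` for `x > 0` (these hold for ENNReal division). -/
noncomputable def payment {α : Type*} [DecidableEq α] (f : Finset α → ℝ) (c : α → ℝ)
    (S : Finset α) : ℝ≥0∞ :=
  ∑ i ∈ S, ENNReal.ofReal (c i) / ENNReal.ofReal (marginal f S i)

/-- The principal's profit from incentivizing `S`: `g(S) = (1 - p(S)) · f(S)`. -/
noncomputable def profit {α : Type*} [DecidableEq α] (f : Finset α → ℝ) (c : α → ℝ)
    (S : Finset α) : ℝ :=
  (1 - (payment f c S).toReal) * f S

/-- `f` is monotone. -/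
def IsMonotoneFn {α : Type*} (f : Finset α → ℝ) : Prop :=
  ∀ ⦃S T : Finset α⦄, S ⊆ T → f S ≤ f T

/-- `f` is subadditive. -/
def IsSubadditive {α : Type*} [DecidableEq α] (f : Finset α → ℝ) : Prop :=
  ∀ S T : Finset α, f (S ∪ T) ≤ f S + f T

/-- `f` is submodular (decreasing marginal values). -/
def IsSubmodular {α : Type*} [DecidableEq α] (f : Finset α → ℝ) : Prop :=
  ∀ ⦃S T : Finset α⦄, S ⊆ T → ∀ i ∉ T, f (insert i T) - f T ≤ f (insert i S) - f S

/-- `f` is additive. -/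
def IsAdditive {α : Type*} [DecidableEq α] (f : Finset α → ℝ) : Prop :=
  ∀ S : Finset α, f S = ∑ i ∈ S, f {i}

/-- `f` is XOS: a finite max of nonnegative additive functions. -/
def IsXOS {α : Type*} (f : Finset α → ℝ) : Prop :=
  ∃ (k : ℕ) (a : Fin (k + 1) → α → ℝ),
    (∀ j i, 0 ≤ a j i) ∧
    ∀ S : Finset α, f S = Finset.univ.sup' Finset.univ_nonempty (fun j => ∑ i ∈ S, a j i)

/-- Agent `i` is light: it can be incentivized with payment at most `1/2`. -/
def isLight {α : Type*} [DecidableEq α] (f : Finset α → ℝ) (c : α → ℝ) (i : α) : Prop :=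
  payment f c {i} ≤ ENNReal.ofReal (1 / 2)

/-- `S` is budget-feasible for budget `B`. -/
def feasible {α : Type*} [DecidableEq α] (f : Finset α → ℝ) (c : α → ℝ) (B : ℝ)
    (S : Finset α) : Prop :=
  payment f c S ≤ ENNReal.ofReal B

/-- `S` is a budget-feasible set of light agents. -/
def feasibleLight {α : Type*} [DecidableEq α] (f : Finset α → ℝ) (c : α → ℝ) (B : ℝ)
    (S : Finset α) : Prop :=
  (∀ i ∈ S, isLight f c i) ∧ payment f c S ≤ ENNReal.ofReal B

/-- The maximum (supremum) value of objective `φ` over sets satisfying `P`. -/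
noncomputable def maxVal {α : Type*} (φ : Finset α → ℝ) (P : Finset α → Prop) : ℝ :=
  sSup (φ '' {S | P S})

/-- `φ` is a BEST objective for the instance `(f, c)`: it is nonnegative, sandwiched between
profit and reward, and satisfies `φ(S) ≤ f(S \ {i}) + φ({i})` for `i ∈ S`. -/
def IsBEST {α : Type*} [DecidableEq α] (f : Finset α → ℝ) (c : α → ℝ)
    (φ : Finset α → ℝ) : Prop :=
  (∀ S, 0 ≤ φ S) ∧
  (∀ S, φ S ≤ f S) ∧
  (∀ S, payment f c S ≤ 1 → (1 - (payment f c S).toReal) * f S ≤ φ S) ∧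
  (∀ S, ∀ i ∈ S, φ S ≤ f (S.erase i) + φ {i})

/-- `φ` is a BEST objective for the instance `(f, c)` restricted to sets satisfying `P`. -/
def IsBESTOn {α : Type*} [DecidableEq α] (f : Finset α → ℝ) (c : α → ℝ)
    (P : Finset α → Prop) (φ : Finset α → ℝ) : Prop :=
  (∀ S, P S → 0 ≤ φ S) ∧
  (∀ S, P S → φ S ≤ f S) ∧
  (∀ S, P S → payment f c S ≤ 1 → (1 - (payment f c S).toReal) * f S ≤ φ S) ∧
  (∀ S, P S → ∀ i ∈ S, φ S ≤ f (S.erase i) + φ {i})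

section Aux

variable {α : Type*} [DecidableEq α] (f : Finset α → ℝ) (c : α → ℝ)

lemma payment_singleton_eq (hf0 : f ∅ = 0) (i : α) :
    payment f c {i} = ENNReal.ofReal (c i) / ENNReal.ofReal (f {i}) := by
  simp [payment, marginal, hf0]

lemma marginal_le_single (hsubmod : IsSubmodular f) (hf0 : f ∅ = 0)
    {S : Finset α} {i : α} (hi : i ∈ S) : marginal f S i ≤ f {i} := by
  have h := hsubmod (Finset.empty_subset (S.erase i)) i (Finset.notMem_erase i S)
  rw [Finset.insert_erase hi] at h
  simpa [marginal, hf0] using h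

lemma marginal_le_erase (hsubmod : IsSubmodular f)
    {S : Finset α} {i j : α} (hj : j ∈ S.erase i) :
    marginal f S j ≤ marginal f (S.erase i) j := by
  have hjS : j ∈ S := Finset.mem_of_mem_erase hj
  have hsub : (S.erase i).erase j ⊆ S.erase j := by
    intro k hk
    simp only [Finset.mem_erase] at hk ⊢
    exact ⟨hk.1, hk.2.2⟩
  have h := hsubmod hsub j (Finset.notMem_erase j S)
  rw [Finset.insert_erase hjS, Finset.insert_erase hj] at h
  simpa [marginal] using h

lemma payment_erase_le (hsubmod : IsSubmodular f) (S : Finset α) (i : α) :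
    payment f c (S.erase i) ≤ payment f c S := by
  calc payment f c (S.erase i)
      ≤ ∑ j ∈ S.erase i, ENNReal.ofReal (c j) / ENNReal.ofReal (marginal f S j) := by
        refine Finset.sum_le_sum fun j hj => ?_
        exact ENNReal.div_le_div_left
          (ENNReal.ofReal_le_ofReal (marginal_le_erase f hsubmod hj)) _
    _ ≤ payment f c S :=
        Finset.sum_le_sum_of_subset (Finset.erase_subset i S)

lemma single_term_le_payment (hsubmod : IsSubmodular f) (hf0 : f ∅ = 0)
    {S : Finset α} {i : α} (hi : i ∈ S) :
    ENNReal.ofReal (c i) / ENNReal.ofReal (f {i}) ≤ payment f c S := by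
  calc ENNReal.ofReal (c i) / ENNReal.ofReal (f {i})
      ≤ ENNReal.ofReal (c i) / ENNReal.ofReal (marginal f S i) :=
        ENNReal.div_le_div_left
          (ENNReal.ofReal_le_ofReal (marginal_le_single f hsubmod hf0 hi)) _
    _ ≤ payment f c S :=
        Finset.single_le_sum
          (f := fun j => ENNReal.ofReal (c j) / ENNReal.ofReal (marginal f S j))
          (fun j _ => zero_le) hi

lemma at_most_one_heavy (hsubmod : IsSubmodular f) (hf0 : f ∅ = 0)
    {S : Finset α} {B : ℝ} (hS : feasible f c B S) (hB1 : B ≤ 1)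
    {i j : α} (hi : i ∈ S) (hj : j ∈ S) (hij : i ≠ j)
    (hhi : ¬ isLight f c i) (hhj : ¬ isLight f c j) : False := by
  rw [isLight, payment_singleton_eq f c hf0, not_le] at hhi hhj
  have hsum : ENNReal.ofReal (c i) / ENNReal.ofReal (f {i}) +
      ENNReal.ofReal (c j) / ENNReal.ofReal (f {j}) ≤ payment f c S := by
    have h1 : ENNReal.ofReal (c i) / ENNReal.ofReal (f {i}) ≤
        payment f c (S.erase j) := by
      refine single_term_le_payment f c hsubmod hf0 ?_
      exact Finset.mem_erase.mpr ⟨hij, hi⟩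
    have h2 : ENNReal.ofReal (c j) / ENNReal.ofReal (f {j}) ≤
        ENNReal.ofReal (c j) / ENNReal.ofReal (marginal f S j) :=
      ENNReal.div_le_div_left
        (ENNReal.ofReal_le_ofReal (marginal_le_single f hsubmod hf0 hj)) _
    calc ENNReal.ofReal (c i) / ENNReal.ofReal (f {i}) +
          ENNReal.ofReal (c j) / ENNReal.ofReal (f {j})
        ≤ payment f c (S.erase j) +
            ENNReal.ofReal (c j) / ENNReal.ofReal (marginal f S j) :=
          add_le_add h1 h2
      _ ≤ (∑ k ∈ S.erase j, ENNReal.ofReal (c k) / ENNReal.ofReal (marginal f S k)) +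
            ENNReal.ofReal (c j) / ENNReal.ofReal (marginal f S j) := by
          refine add_le_add (Finset.sum_le_sum fun k hk => ?_) le_rfl
          exact ENNReal.div_le_div_left
            (ENNReal.ofReal_le_ofReal (marginal_le_erase f hsubmod hk)) _
      _ = payment f c S := by
          rw [payment, ← Finset.sum_erase_add S _ hj]
  have hlt : (1 : ℝ≥0∞) < payment f c S := by
    have : ENNReal.ofReal (1/2) + ENNReal.ofReal (1/2) <
        ENNReal.ofReal (c i) / ENNReal.ofReal (f {i}) +
        ENNReal.ofReal (c j) / ENNReal.ofReal (f {j}) :=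
      ENNReal.add_lt_add hhi hhj
    have heq : ENNReal.ofReal (1/2) + ENNReal.ofReal (1/2) = 1 := by
      rw [← ENNReal.ofReal_add (by norm_num) (by norm_num)]; norm_num
    rw [heq] at this
    exact lt_of_lt_of_le this hsum
  have hle : payment f c S ≤ 1 := by
    refine le_trans hS ?_
    calc ENNReal.ofReal B ≤ ENNReal.ofReal 1 := ENNReal.ofReal_le_ofReal hB1
      _ = 1 := ENNReal.ofReal_one
  exact absurd (lt_of_lt_of_le hlt hle) (lt_irrefl _)

end Aux

/-- **Key Property of BEST Objectives (submodular case).** -/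
theorem best_key_property_submodular {α : Type*} [DecidableEq α] [Fintype α] [Nonempty α]
    (f : Finset α → ℝ) (c : α → ℝ) (φ : Finset α → ℝ)
    (hf01 : ∀ S, f S ∈ Set.Icc (0 : ℝ) 1) (hf0 : f ∅ = 0)
    (hmono : IsMonotoneFn f) (hsubmod : IsSubmodular f) (hc : ∀ i, 0 ≤ c i)
    (hφ : IsBEST f c φ)
    (B : ℝ) (hB0 : 0 < B) (hB1 : B ≤ 1) :
    maxVal φ (feasible f c B) ≤
      maxVal f (feasibleLight f c B) + ⨆ i : α, φ {i} := by
  classical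
  obtain ⟨hφ0, hφf, -, hφkey⟩ := hφ
  have hbdd : BddAbove (f '' {S | feasibleLight f c B S}) := by
    refine ⟨1, ?_⟩
    rintro x ⟨S, -, rfl⟩
    exact (hf01 S).2
  have hempty : feasibleLight f c B ∅ := by
    refine ⟨fun i hi => absurd hi (Finset.notMem_empty i), ?_⟩
    simp [payment]
  have hM0 : 0 ≤ maxVal f (feasibleLight f c B) := by
    have h := le_csSup hbdd ⟨∅, hempty, rfl⟩
    rw [hf0] at h
    exact h
  have hsup_bdd : BddAbove (Set.range fun i : α => φ {i}) :=
    (Set.finite_range _).bddAbove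
  have hsup0 : 0 ≤ ⨆ i : α, φ {i} :=
    le_trans (hφ0 {Classical.arbitrary α}) (le_ciSup hsup_bdd (Classical.arbitrary α))
  refine Real.sSup_le ?_ (by linarith)
  rintro x ⟨S, hS, rfl⟩
  by_cases hall : ∀ i ∈ S, isLight f c i
  · have h1 : f S ≤ maxVal f (feasibleLight f c B) :=
      le_csSup hbdd ⟨S, ⟨hall, hS⟩, rfl⟩
    linarith [hφf S]
  · push_neg at hall
    obtain ⟨i, hiS, hheavy⟩ := hall
    have hkey := hφkey S i hiS
    have hlight : ∀ j ∈ S.erase i, isLight f c j := by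
      intro j hj
      by_contra hjh
      exact at_most_one_heavy f c hsubmod hf0 hS hB1
        (Finset.mem_of_mem_erase hj) hiS
        (Finset.ne_of_mem_erase hj) hjh hheavy
    have hfeas : feasibleLight f c B (S.erase i) :=
      ⟨hlight, le_trans (payment_erase_le f c hsubmod S i) hS⟩
    have h1 : f (S.erase i) ≤ maxVal f (feasibleLight f c B) :=
      le_csSup hbdd ⟨_, hfeas, rfl⟩
    have h2 : φ {i} ≤ ⨆ j : α, φ {j} := le_ciSup hsup_bdd i
    linarith
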